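/- Let G be a finite simple connected graph with m edges and n ≥ 4 vertices. Then σ⁻(G) = ⌊m/2 + n/4⌋ if and only if G is K_n, or K_n minus one edge, or K_n minus the three edges of a triangle. -/

import Mathlib

open scoped Classical

variable {V : Type*}

namespace PSG

/-- A bipartition of the vertex set given by `A` and its complement is
near-balanced (a parity-partition) if the sizes differ by at most 1. -/
def Balanced [Fintype V] [DecidableEq V] (A : Finset V) : Prop :=
  |(A.card : ℤ) - ((Aᶜ : Finset V).card : ℤ)| ≤ 1

/-- The number of edges of `G` between `A` and its complement
(the number of negative edges of the associated parity signature). -/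
def cut [Fintype V] [DecidableEq V] (G : SimpleGraph V) [DecidableRel G.Adj]
    (A : Finset V) : ℕ :=
  ((A ×ˢ (Aᶜ : Finset V)).filter fun p => G.Adj p.1 p.2).card

/-- `Σ⁻(G)`: the set of numbers of negative edges over all parity signatures. -/
def sigmaSet [Fintype V] [DecidableEq V] (G : SimpleGraph V) [DecidableRel G.Adj] :
    Set ℕ :=
  {k | ∃ A : Finset V, Balanced A ∧ k = cut G A}

/-- The rna number `σ⁻(G)`. -/
noncomputable def rna [Fintype V] [DecidableEq V] (G : SimpleGraph V)
    [DecidableRel G.Adj] : ℕ :=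
  sInf (sigmaSet G)

/-- `d⁻(v)`: number of negative edges (crossing edges) at `v`. -/
def dneg [Fintype V] [DecidableEq V] (G : SimpleGraph V) [DecidableRel G.Adj]
    (A : Finset V) (v : V) : ℕ :=
  (Finset.univ.filter fun u => G.Adj v u ∧ ¬(u ∈ A ↔ v ∈ A)).card

/-- `d⁺(v)`: number of positive edges (same-side edges) at `v`. -/
def dpos [Fintype V] [DecidableEq V] (G : SimpleGraph V) [DecidableRel G.Adj]
    (A : Finset V) (v : V) : ℕ :=
  (Finset.univ.filter fun u => G.Adj v u ∧ (u ∈ A ↔ v ∈ A)).card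

/-- The sign-difference `dᐃ(v) = d⁻(v) - d⁺(v)`. -/
def dDelta [Fintype V] [DecidableEq V] (G : SimpleGraph V) [DecidableRel G.Adj]
    (A : Finset V) (v : V) : ℤ :=
  (dneg G A v : ℤ) - (dpos G A v : ℤ)

/-- `f` is a parity-labeling witnessing that `σ` is a parity-signature of `G`. -/
def IsParityLabeling [Fintype V] (G : SimpleGraph V) (σ : V → V → ℤ)
    (f : V ≃ Fin (Fintype.card V)) : Prop :=
  ∀ u v : V, G.Adj u v →
    σ u v = if ((f u : ℕ) % 2 = (f v : ℕ) % 2) then 1 else -1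

/-- `(G, σ)` is a parity signed graph. -/
def IsParitySigned [Fintype V] (G : SimpleGraph V) (σ : V → V → ℤ) : Prop :=
  ∃ f : V ≃ Fin (Fintype.card V), IsParityLabeling G σ f

/-- The sign multiplier of a switch at the vertex set `U`. -/
def sgn [DecidableEq V] (U : Finset V) (v : V) : ℤ := if v ∈ U then -1 else 1

/-- The signature obtained from `σ` by switching at the set of vertices `U`. -/
def switch [DecidableEq V] (σ : V → V → ℤ) (U : Finset V) : V → V → ℤ :=
  fun a b => sgn U a * sgn U b * σ a b

/-- One parity-switch step: switch at a vertex with odd label and one with even label. -/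
def ParitySwitchStep [Fintype V] [DecidableEq V] (G : SimpleGraph V)
    (σ σ' : V → V → ℤ) : Prop :=
  ∃ f : V ≃ Fin (Fintype.card V), IsParityLabeling G σ f ∧
    ∃ u v : V, (f u : ℕ) % 2 = 1 ∧ (f v : ℕ) % 2 = 0 ∧ σ' = switch σ {u, v}

/-- `G` is the star `K_{1,n-1}` on its vertex set. -/
def IsStar (G : SimpleGraph V) : Prop :=
  ∃ c : V, ∀ a b : V, G.Adj a b ↔ ((a = c ∧ b ≠ c) ∨ (b = c ∧ a ≠ c))

/-- The unordered pair `{a,b}` equals the unordered pair `{u,v}`. -/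
def pairEq (a b u v : V) : Prop := (a = u ∧ b = v) ∨ (a = v ∧ b = u)

/-- `G` is the complete graph minus one edge. -/
def IsCompleteMinusEdge (G : SimpleGraph V) : Prop :=
  ∃ u v : V, u ≠ v ∧ ∀ a b : V, G.Adj a b ↔ (a ≠ b ∧ ¬ pairEq a b u v)

/-- `G` is the complete graph minus the three edges of a triangle. -/
def IsCompleteMinusTriangle (G : SimpleGraph V) : Prop :=
  ∃ u v w : V, u ≠ v ∧ u ≠ w ∧ v ≠ w ∧
    ∀ a b : V, G.Adj a b ↔
      (a ≠ b ∧ ¬ (pairEq a b u v ∨ pairEq a b u w ∨ pairEq a b v w))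

/-- `G` is the complete graph minus two nonadjacent (disjoint) edges. -/
def IsCompleteMinusTwoDisjointEdges (G : SimpleGraph V) : Prop :=
  ∃ u v x y : V, u ≠ v ∧ x ≠ y ∧ u ≠ x ∧ u ≠ y ∧ v ≠ x ∧ v ≠ y ∧
    ∀ a b : V, G.Adj a b ↔ (a ≠ b ∧ ¬ (pairEq a b u v ∨ pairEq a b x y))

/-- `G` is the complete graph minus two adjacent edges. -/
def IsCompleteMinusTwoAdjacentEdges (G : SimpleGraph V) : Prop :=
  ∃ u v w : V, u ≠ v ∧ u ≠ w ∧ v ≠ w ∧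
    ∀ a b : V, G.Adj a b ↔ (a ≠ b ∧ ¬ (pairEq a b u v ∨ pairEq a b u w))

/-- `G` is the join `P₂ ∨ I_{n-2}`: an edge joined completely to an independent set. -/
def IsEdgeJoinIndep (G : SimpleGraph V) : Prop :=
  ∃ a b : V, a ≠ b ∧
    ∀ x y : V, G.Adj x y ↔ (x ≠ y ∧ (x = a ∨ x = b ∨ y = a ∨ y = b))


open Finset

section Helpers

set_option linter.unusedSectionVars false
set_option linter.unusedVariables false

lemma pascalC (n k : ℕ) (hn : 3 ≤ n) (hk : 2 ≤ k) :
    (n - 3).choose (k - 1) + (n - 3).choose (k - 2) = (n - 2).choose (k - 1) := by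
  obtain ⟨m, rfl⟩ : ∃ m, n = m + 3 := ⟨n - 3, by omega⟩
  obtain ⟨j, rfl⟩ : ∃ j, k = j + 2 := ⟨k - 2, by omega⟩
  simp only [show m + 3 - 2 = m + 1 by omega, show m + 3 - 3 = m by omega,
    show j + 2 - 1 = j + 1 by omega, show j + 2 - 2 = j by omega]
  rw [Nat.choose_succ_succ]
  simp only [Nat.succ_eq_add_one]
  omega

lemma chooseMiddlePos (n : ℕ) (hn : 2 ≤ n) : 0 < (n - 2).choose ((n + 1) / 2 - 1) :=
  Nat.choose_pos (by omega)

-- strict central inequality: C(n-2, k-1) < 4 C(n-4, k-2), k = (n+1)/2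
lemma F3 (n : ℕ) (hn : 4 ≤ n) :
    (n - 2).choose ((n + 1) / 2 - 1) < 4 * (n - 4).choose ((n + 1) / 2 - 2) := by
  obtain ⟨a, ha⟩ : ∃ a, n = 2 * a + 4 ∨ n = 2 * a + 5 := ⟨(n - 4) / 2, by omega⟩
  rcases ha with rfl | rfl
  · simp only [show 2 * a + 4 - 2 = 2 * a + 2 by omega, show 2 * a + 4 - 4 = 2 * a by omega,
      show (2 * a + 4 + 1) / 2 - 1 = a + 1 by omega, show (2 * a + 4 + 1) / 2 - 2 = a by omega]
    have hY : 0 < (2 * a).choose a := Nat.choose_pos (by omega)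
    have h1 : (2 * a + 2).choose (a + 1) = (2 * a + 1).choose a + (2 * a + 1).choose (a + 1) :=
      Nat.choose_succ_succ _ _
    have h2 : (2 * a + 1).choose a = (2 * a + 1).choose (a + 1) := by
      rw [← Nat.choose_symm (show a + 1 ≤ 2 * a + 1 by omega)]
      congr 1; omega
    have h3 : (2 * a + 1).choose (a + 1) = (2 * a).choose a + (2 * a).choose (a + 1) :=
      Nat.choose_succ_succ _ _
    have h4 : (2 * a).choose (a + 1) * (a + 1) = (2 * a).choose a * (2 * a - a) :=
      Nat.choose_succ_right_eq _ _
    have h5 : (2 * a).choose (a + 1) < (2 * a).choose a ∨ a = 0 := by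
      rcases Nat.eq_zero_or_pos a with h | h
      · right; exact h
      · left
        have : (2 * a).choose (a + 1) * (a + 1) < (2 * a).choose a * (a + 1) := by
          rw [h4, show 2 * a - a = a by omega]
          exact (Nat.mul_lt_mul_left hY).mpr (by omega)
        exact lt_of_mul_lt_mul_right this (Nat.zero_le _)
    rcases h5 with h5 | rfl
    · omega
    · simp
  · simp only [show 2 * a + 5 - 2 = 2 * a + 3 by omega, show 2 * a + 5 - 4 = 2 * a + 1 by omega,
      show (2 * a + 5 + 1) / 2 - 1 = a + 2 by omega, show (2 * a + 5 + 1) / 2 - 2 = a + 1 by omega]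
    have hY : 0 < (2 * a + 1).choose (a + 1) := Nat.choose_pos (by omega)
    have h1 : (2 * a + 3).choose (a + 2)
        = (2 * a + 2).choose (a + 1) + (2 * a + 2).choose (a + 2) :=
      Nat.choose_succ_succ _ _
    have h2 : (2 * a + 2).choose (a + 1) = (2 * a + 1).choose a + (2 * a + 1).choose (a + 1) :=
      Nat.choose_succ_succ _ _
    have h2' : (2 * a + 1).choose a = (2 * a + 1).choose (a + 1) := by
      rw [← Nat.choose_symm (show a + 1 ≤ 2 * a + 1 by omega)]
      congr 1; omega
    have h3 : (2 * a + 2).choose (a + 2)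
        = (2 * a + 1).choose (a + 1) + (2 * a + 1).choose (a + 2) :=
      Nat.choose_succ_succ _ _
    have h4 : (2 * a + 1).choose (a + 2) * (a + 2) = (2 * a + 1).choose (a + 1) * (2 * a + 1 - (a + 1)) :=
      Nat.choose_succ_right_eq _ _
    have h5 : (2 * a + 1).choose (a + 2) < (2 * a + 1).choose (a + 1) := by
      have : (2 * a + 1).choose (a + 2) * (a + 2) < (2 * a + 1).choose (a + 1) * (a + 2) := by
        rw [h4, show 2 * a + 1 - (a + 1) = a by omega]
        exact (Nat.mul_lt_mul_left hY).mpr (by omega)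
      exact lt_of_mul_lt_mul_right this (Nat.zero_le _)
    omega


lemma arith1 (n m t : ℕ) (hn : 4 ≤ n) (hmt : m + t = n.choose 2) :
    n / 2 * ((n + 1) / 2) = (2 * m + n) / 4 + (t + 1) / 2 := by
  rw [Nat.choose_two_right] at hmt
  obtain ⟨q, hq⟩ : ∃ q, n = 2 * q ∨ n = 2 * q + 1 := ⟨n / 2, by omega⟩
  obtain ⟨s, hs⟩ : ∃ s, s = q * q := ⟨_, rfl⟩
  rcases hq with rfl | rfl
  · have h1 : 2 * q * (2 * q - 1) / 2 = q * (2 * q - 1) := by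
      rw [mul_assoc, Nat.mul_div_cancel_left _ (by norm_num : 0 < 2)]
    have h2 : q * (2 * q - 1) + q = 2 * s := by
      cases q with
      | zero => simp [hs]
      | succ p =>
        rw [hs, show 2 * (p + 1) - 1 = 2 * p + 1 by omega]
        ring
    rw [h1] at hmt
    have hLHS : 2 * q / 2 * ((2 * q + 1) / 2) = s := by
      rw [Nat.mul_div_cancel_left _ (by norm_num : 0 < 2), show (2 * q + 1) / 2 = q by omega, hs]
    rw [hLHS]
    omega
  · have h1 : (2 * q + 1) * (2 * q + 1 - 1) / 2 = q * (2 * q + 1) := by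
      rw [show 2 * q + 1 - 1 = 2 * q by omega, mul_comm (2 * q + 1) (2 * q), mul_assoc,
        Nat.mul_div_cancel_left _ (by norm_num : 0 < 2), mul_comm]
    have h2 : q * (2 * q + 1) = 2 * s + q := by rw [hs]; ring
    rw [h1, h2] at hmt
    have hLHS : (2 * q + 1) / 2 * ((2 * q + 1 + 1) / 2) = s + q := by
      rw [show (2 * q + 1) / 2 = q by omega, show (2 * q + 1 + 1) / 2 = q + 1 by omega, hs]
      ring
    rw [hLHS]
    omega

section CountLemmas
variable [Fintype V] [DecidableEq V]
lemma countPQ (k : ℕ) (P Q : Finset V) (hPQ : Disjoint P Q) (hk : P.card ≤ k) :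
    (((univ : Finset V).powersetCard k).filter fun A => P ⊆ A ∧ Disjoint Q A).card
      = (Fintype.card V - (P.card + Q.card)).choose (k - P.card) := by
  have hcard : (univ \ (P ∪ Q)).card = Fintype.card V - (P.card + Q.card) := by
    rw [card_sdiff_of_subset (subset_univ _), card_union_of_disjoint hPQ, card_univ]
  rw [← hcard, ← Finset.card_powersetCard]
  apply Finset.card_nbij' (fun A => A \ P) (fun B => B ∪ P)
  · intro A hA
    simp only [Finset.mem_coe, mem_filter, mem_powersetCard] at hA
    obtain ⟨⟨hAs, hAc⟩, hPA, hQA⟩ := hA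
    rw [Finset.mem_coe, mem_powersetCard]
    constructor
    · intro x hx
      simp only [mem_sdiff, mem_union] at hx ⊢
      exact ⟨mem_univ x, fun h => h.elim hx.2
        (fun hq => (Finset.disjoint_right.mp hQA hx.1 hq).elim)⟩
    · rw [card_sdiff_of_subset hPA, hAc]
  · intro B hB
    rw [Finset.mem_coe, mem_powersetCard] at hB
    obtain ⟨hBs, hBc⟩ := hB
    have hBP : Disjoint B P := by
      refine Finset.disjoint_left.mpr fun x hx hxP => ?_
      have := hBs hx; simp only [mem_sdiff, mem_union] at this; exact this.2 (Or.inl hxP)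
    have hBQ : Disjoint Q B := by
      refine Finset.disjoint_right.mpr fun x hx hxQ => ?_
      have := hBs hx; simp only [mem_sdiff, mem_union] at this; exact this.2 (Or.inr hxQ)
    simp only [Finset.mem_coe, mem_filter, mem_powersetCard]
    refine ⟨⟨subset_univ _, ?_⟩, subset_union_right, ?_⟩
    · rw [card_union_of_disjoint hBP, hBc]; omega
    · exact Finset.disjoint_union_right.mpr ⟨hBQ, hPQ.symm⟩
  · intro A hA
    simp only [Finset.mem_coe, mem_filter, mem_powersetCard] at hA
    exact sdiff_union_of_subset hA.2.1
  · intro B hB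
    rw [Finset.mem_coe, mem_powersetCard] at hB
    refine union_sdiff_cancel_right ?_
    refine Finset.disjoint_left.mpr fun x hx hxP => ?_
    have := hB.1 hx; simp only [mem_sdiff, mem_union] at this; exact this.2 (Or.inl hxP)

lemma count2 (k : ℕ) (hk : 1 ≤ k) (u v : V) (huv : u ≠ v) :
    (((univ : Finset V).powersetCard k).filter fun A => u ∈ A ∧ v ∉ A).card
      = (Fintype.card V - 2).choose (k - 1) := by
  have := countPQ (V := V) k {u} {v} (by simp [huv.symm, huv]) (by simpa)
  simp only [card_singleton] at this
  rw [← this]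
  congr 1
  apply filter_congr
  intro A _
  simp [Finset.disjoint_singleton_left]

lemma count3a (k : ℕ) (hk : 1 ≤ k) (u v w : V) (h1 : u ≠ v) (h2 : u ≠ w) (h3 : v ≠ w) :
    (((univ : Finset V).powersetCard k).filter fun A => u ∈ A ∧ v ∉ A ∧ w ∉ A).card
      = (Fintype.card V - 3).choose (k - 1) := by
  have := countPQ (V := V) k {u} {v, w} (by simp [h1.symm, h2.symm, h1, h2]) (by simpa)
  rw [show ({u} : Finset V).card = 1 from rfl, show ({v, w} : Finset V).card = 2 from by
    rw [card_insert_of_notMem (by simp [h3]), card_singleton]] at this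
  rw [← this]
  congr 1
  apply filter_congr
  intro A _
  simp only [singleton_subset_iff, Finset.disjoint_insert_left, Finset.disjoint_singleton_left]

lemma count3b (k : ℕ) (hk : 2 ≤ k) (u v w : V) (h1 : u ≠ v) (h2 : u ≠ w) (h3 : v ≠ w) :
    (((univ : Finset V).powersetCard k).filter fun A => u ∈ A ∧ v ∈ A ∧ w ∉ A).card
      = (Fintype.card V - 3).choose (k - 2) := by
  have := countPQ (V := V) k {u, v} {w} (by simp [h2.symm, h3.symm]) (by
    rw [show ({u, v} : Finset V).card = 2 from by
      rw [card_insert_of_notMem (by simp [h1]), card_singleton]]; omega)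
  rw [show ({w} : Finset V).card = 1 from rfl, show ({u, v} : Finset V).card = 2 from by
    rw [card_insert_of_notMem (by simp [h1]), card_singleton]] at this
  rw [← this]
  congr 1
  apply filter_congr
  intro A _
  simp only [Finset.insert_subset_iff, singleton_subset_iff, Finset.disjoint_singleton_left]
  tauto

lemma count4 (k : ℕ) (hk : 2 ≤ k) (u v w x : V) (h1 : u ≠ v) (h2 : u ≠ w) (h3 : u ≠ x)
    (h4 : v ≠ w) (h5 : v ≠ x) (h6 : w ≠ x) :
    (((univ : Finset V).powersetCard k).filter fun A => u ∈ A ∧ v ∈ A ∧ w ∉ A ∧ x ∉ A).card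
      = (Fintype.card V - 4).choose (k - 2) := by
  have hcuv : ({u, v} : Finset V).card = 2 := by
    rw [card_insert_of_notMem (by simp [h1]), card_singleton]
  have hcwx : ({w, x} : Finset V).card = 2 := by
    rw [card_insert_of_notMem (by simp [h6]), card_singleton]
  have := countPQ (V := V) k {u, v} {w, x} (by
    simp only [Finset.disjoint_insert_left, Finset.disjoint_insert_right,
      Finset.disjoint_singleton_left, Finset.disjoint_singleton_right]
    simp [h2.symm, h3.symm, h4.symm, h5.symm, mem_insert]) (by rw [hcuv]; omega)
  rw [hcuv, hcwx] at this
  rw [← this]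
  congr 1
  apply filter_congr
  intro A _
  simp only [Finset.insert_subset_iff, singleton_subset_iff, Finset.disjoint_insert_left,
    Finset.disjoint_singleton_left]
  tauto


lemma balanced_iff (A : Finset V) :
    Balanced A ↔ (A.card = Fintype.card V / 2 ∨ A.card = (Fintype.card V + 1) / 2) := by
  have h1 : (Aᶜ : Finset V).card = Fintype.card V - A.card := Finset.card_compl A
  have h2 : A.card ≤ Fintype.card V := Finset.card_le_univ A
  unfold Balanced
  rw [abs_le]
  omega

lemma cut_compl (G : SimpleGraph V) [DecidableRel G.Adj] (A : Finset V) :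
    cut G A + cut Gᶜ A = A.card * (Aᶜ : Finset V).card := by
  unfold cut
  rw [← Finset.card_product]
  have : ((A ×ˢ (Aᶜ : Finset V)).filter fun p => Gᶜ.Adj p.1 p.2)
      = ((A ×ˢ (Aᶜ : Finset V)).filter fun p => ¬ G.Adj p.1 p.2) := by
    apply filter_congr
    intro p hp
    simp only [mem_product, Finset.mem_compl] at hp
    have hne : p.1 ≠ p.2 := fun h => hp.2 (h ▸ hp.1)
    simp [SimpleGraph.compl_adj, hne]
  rw [this]
  exact Finset.card_filter_add_card_filter_not _

lemma cut_pairs (G : SimpleGraph V) [DecidableRel G.Adj] (A : Finset V) :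
    cut G A = (((univ : Finset (V × V)).filter fun p => G.Adj p.1 p.2).filter
      fun p => p.1 ∈ A ∧ p.2 ∉ A).card := by
  unfold cut
  congr 1
  rw [Finset.filter_filter]
  ext p
  simp only [mem_filter, mem_product, Finset.mem_compl, mem_univ, true_and]
  tauto


/-- The collection of (n+1)/2-subsets separating u from v. -/
def sepSet (u v : V) : Finset (Finset V) :=
  ((univ : Finset V).powersetCard ((Fintype.card V + 1) / 2)).filter
    (fun A => (u ∈ A ∧ v ∉ A) ∨ (v ∈ A ∧ u ∉ A))

/-- Count of members of `sepSet u v` containing q.1 and avoiding q.2. -/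
def Ncnt (u v : V) (q : V × V) : ℕ :=
  (((univ : Finset V).powersetCard ((Fintype.card V + 1) / 2)).filter
    (fun A => ((u ∈ A ∧ v ∉ A) ∨ (v ∈ A ∧ u ∉ A)) ∧ q.1 ∈ A ∧ q.2 ∉ A)).card

lemma Ncnt_eq_filter (u v : V) (q : V × V) :
    Ncnt u v q = ((sepSet u v).filter (fun A => q.1 ∈ A ∧ q.2 ∉ A)).card := by
  rw [sepSet, Finset.filter_filter]; rfl

section core
variable (H : SimpleGraph V) [DecidableRel H.Adj] (u v : V)

lemma sum_cut_core :
    ∑ A ∈ sepSet u v, cut H A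
      = ∑ p ∈ ((univ : Finset (V × V)).filter fun p => H.Adj p.1 p.2), Ncnt u v p := by
  have h1 : ∀ A ∈ sepSet u v, cut H A
      = ∑ p ∈ ((univ : Finset (V × V)).filter fun p => H.Adj p.1 p.2),
          (if p.1 ∈ A ∧ p.2 ∉ A then 1 else 0) := by
    intro A _
    rw [cut_pairs, Finset.card_filter]
  rw [Finset.sum_congr rfl h1, Finset.sum_comm]
  apply Finset.sum_congr rfl
  intro p _
  rw [Ncnt_eq_filter, Finset.card_filter]

lemma sum_swap_core :
    ∑ p ∈ ((univ : Finset (V × V)).filter fun p => H.Adj p.1 p.2), Ncnt u v p.swap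
      = ∑ p ∈ ((univ : Finset (V × V)).filter fun p => H.Adj p.1 p.2), Ncnt u v p := by
  apply Finset.sum_nbij' (i := Prod.swap) (j := Prod.swap)
  · intro p hp; simp only [mem_filter, mem_univ, true_and] at hp ⊢; exact hp.symm
  · intro p hp; simp only [mem_filter, mem_univ, true_and] at hp ⊢; exact hp.symm
  · intro p _; simp
  · intro p _; simp
  · intro p _; rfl

end core

section counts

lemma Ncnt_congr (u v a b : V) (q : Finset V → Prop) [DecidablePred q]
    (h : ∀ A : Finset V, ((((u ∈ A ∧ v ∉ A) ∨ (v ∈ A ∧ u ∉ A)) ∧ a ∈ A ∧ b ∉ A) ↔ q A)) :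
    Ncnt u v (a, b)
      = (((univ : Finset V).powersetCard ((Fintype.card V + 1) / 2)).filter q).card := by
  rw [Ncnt]
  dsimp only
  rw [Finset.filter_congr (fun A _ => h A)]

variable (hn : 4 ≤ Fintype.card V) (u v : V) (huv : u ≠ v)

lemma kk2 (hn : 4 ≤ Fintype.card V) : 2 ≤ (Fintype.card V + 1) / 2 := by omega
lemma kk1 (hn : 4 ≤ Fintype.card V) : 1 ≤ (Fintype.card V + 1) / 2 := by omega

include hn huv in
lemma N_uv : Ncnt u v (u, v) = (Fintype.card V - 2).choose ((Fintype.card V + 1) / 2 - 1) := by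
  rw [Ncnt_congr u v u v (fun A => u ∈ A ∧ v ∉ A) (fun A => by tauto)]
  exact count2 _ (kk1 hn) u v huv

include hn huv in
lemma N_vu : Ncnt u v (v, u) = (Fintype.card V - 2).choose ((Fintype.card V + 1) / 2 - 1) := by
  rw [Ncnt_congr u v v u (fun A => v ∈ A ∧ u ∉ A) (fun A => by tauto)]
  exact count2 _ (kk1 hn) v u huv.symm

include hn huv in
lemma N_shared_fst (b : V) (hbu : b ≠ u) (hbv : b ≠ v) :
    Ncnt u v (u, b) + Ncnt u v (b, u)
      = (Fintype.card V - 2).choose ((Fintype.card V + 1) / 2 - 1) := by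
  have e1 : Ncnt u v (u, b) = (Fintype.card V - 3).choose ((Fintype.card V + 1) / 2 - 1) := by
    rw [Ncnt_congr u v u b (fun A => u ∈ A ∧ v ∉ A ∧ b ∉ A) (fun A => by tauto)]
    exact count3a _ (kk1 hn) u v b huv hbu.symm hbv.symm
  have e2 : Ncnt u v (b, u) = (Fintype.card V - 3).choose ((Fintype.card V + 1) / 2 - 2) := by
    rw [Ncnt_congr u v b u (fun A => v ∈ A ∧ b ∈ A ∧ u ∉ A) (fun A => by tauto)]
    exact count3b _ (kk2 hn) v b u hbv.symm huv.symm hbu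
  rw [e1, e2]
  exact pascalC _ _ (by omega) (kk2 hn)

include hn huv in
lemma N_shared_snd (b : V) (hbu : b ≠ u) (hbv : b ≠ v) :
    Ncnt u v (v, b) + Ncnt u v (b, v)
      = (Fintype.card V - 2).choose ((Fintype.card V + 1) / 2 - 1) := by
  have e1 : Ncnt u v (v, b) = (Fintype.card V - 3).choose ((Fintype.card V + 1) / 2 - 1) := by
    rw [Ncnt_congr u v v b (fun A => v ∈ A ∧ u ∉ A ∧ b ∉ A) (fun A => by tauto)]
    exact count3a _ (kk1 hn) v u b huv.symm hbv.symm hbu.symm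
  have e2 : Ncnt u v (b, v) = (Fintype.card V - 3).choose ((Fintype.card V + 1) / 2 - 2) := by
    rw [Ncnt_congr u v b v (fun A => u ∈ A ∧ b ∈ A ∧ v ∉ A) (fun A => by tauto)]
    exact count3b _ (kk2 hn) u b v hbu.symm huv hbv
  rw [e1, e2]
  exact pascalC _ _ (by omega) (kk2 hn)

include hn huv in
lemma N_disj (a b : V) (hab : a ≠ b) (hau : a ≠ u) (hav : a ≠ v) (hbu : b ≠ u) (hbv : b ≠ v) :
    Ncnt u v (a, b) = 2 * (Fintype.card V - 4).choose ((Fintype.card V + 1) / 2 - 2) := by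
  rw [Ncnt_congr u v a b
    (fun A => (u ∈ A ∧ a ∈ A ∧ v ∉ A ∧ b ∉ A) ∨ (v ∈ A ∧ a ∈ A ∧ u ∉ A ∧ b ∉ A))
    (fun A => by tauto)]
  rw [Finset.filter_or, Finset.card_union_of_disjoint (by
    simp only [Finset.disjoint_left, mem_filter]
    rintro A ⟨-, hA1, -, -, -⟩ ⟨-, -, -, hA3, -⟩
    exact hA3 hA1)]
  rw [count4 _ (kk2 hn) u a v b hau.symm huv hbu.symm hav hab.symm.symm hbv.symm,
    count4 _ (kk2 hn) v a u b hav.symm huv.symm hbv.symm hau hab hbu.symm]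
  omega

end counts

section nn
variable (hn : 4 ≤ Fintype.card V) {u v : V} (huv : u ≠ v)

include hn huv in
lemma NN_ge (H : SimpleGraph V) [DecidableRel H.Adj] (p : V × V) (hp : H.Adj p.1 p.2) :
    (Fintype.card V - 2).choose ((Fintype.card V + 1) / 2 - 1)
      ≤ Ncnt u v p + Ncnt u v p.swap := by
  obtain ⟨a, b⟩ := p
  have hab : a ≠ b := hp.ne
  simp only [Prod.swap_prod_mk]
  by_cases hau : a = u
  · subst hau
    by_cases hbv : b = v
    · subst hbv
      rw [N_uv hn a b huv, N_vu hn a b huv]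
      omega
    · rw [N_shared_fst hn a v huv b hab.symm hbv]
  · by_cases hav : a = v
    · subst hav
      by_cases hbu : b = u
      · subst hbu
        rw [N_vu hn b a huv, N_uv hn b a huv]
        omega
      · rw [N_shared_snd hn u a huv b hbu hab.symm]
    · by_cases hbu : b = u
      · subst hbu
        rw [add_comm (Ncnt b v (a, b)) (Ncnt b v (b, a)), N_shared_fst hn b v huv a hau hav]
      · by_cases hbv : b = v
        · subst hbv
          rw [add_comm (Ncnt u b (a, b)) (Ncnt u b (b, a)), N_shared_snd hn u b huv a hau hav]
        · rw [N_disj hn u v huv a b hab hau hav hbu hbv,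
            N_disj hn u v huv b a hab.symm hbu hbv hau hav]
          have := F3 (Fintype.card V) hn
          omega

include hn huv in
lemma NN_uv2 : Ncnt u v (u, v) + Ncnt u v (u, v).swap
    = 2 * (Fintype.card V - 2).choose ((Fintype.card V + 1) / 2 - 1) := by
  simp only [Prod.swap_prod_mk]
  rw [N_uv hn u v huv, N_vu hn u v huv]
  ring

include hn huv in
lemma NN_vu2 : Ncnt u v (v, u) + Ncnt u v (v, u).swap
    = 2 * (Fintype.card V - 2).choose ((Fintype.card V + 1) / 2 - 1) := by
  simp only [Prod.swap_prod_mk]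
  rw [N_uv hn u v huv, N_vu hn u v huv]
  ring

include hn huv in
lemma NN_wx2 (w x : V) (hwx : w ≠ x) (hwu : w ≠ u) (hwv : w ≠ v) (hxu : x ≠ u) (hxv : x ≠ v) :
    (Fintype.card V - 2).choose ((Fintype.card V + 1) / 2 - 1) + 1
      ≤ Ncnt u v (w, x) + Ncnt u v (w, x).swap := by
  simp only [Prod.swap_prod_mk]
  rw [N_disj hn u v huv w x hwx hwu hwv hxu hxv,
    N_disj hn u v huv x w hwx.symm hxu hxv hwu hwv]
  have := F3 (Fintype.card V) hn
  omega

include hn huv in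
lemma card_sepSet : (sepSet u v).card
    = 2 * (Fintype.card V - 2).choose ((Fintype.card V + 1) / 2 - 1) := by
  rw [sepSet, Finset.filter_or, Finset.card_union_of_disjoint (by
    simp only [Finset.disjoint_left, mem_filter]
    rintro A ⟨-, hA1, -⟩ ⟨-, -, hA2⟩
    exact hA2 hA1)]
  rw [count2 _ (kk1 hn) u v huv, count2 _ (kk1 hn) v u huv.symm]
  ring

include hn in
lemma mem_sepSet_balanced {A : Finset V} (hA : A ∈ sepSet u v) : Balanced A := by
  rw [sepSet, mem_filter, mem_powersetCard] at hA
  rw [balanced_iff]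
  right
  exact hA.1.2

end nn

section main
variable (hn : 4 ≤ Fintype.card V)

include hn in
lemma lemmaA (H : SimpleGraph V) [DecidableRel H.Adj] {u v : V} (hadj : H.Adj u v) :
    ∃ A : Finset V, Balanced A ∧ H.edgeFinset.card + 1 ≤ 2 * cut H A := by
  classical
  have huv : u ≠ v := hadj.ne
  set C1 := (Fintype.card V - 2).choose ((Fintype.card V + 1) / 2 - 1) with hC1def
  set t := H.edgeFinset.card with htdef
  set D := ((univ : Finset (V × V)).filter fun p => H.Adj p.1 p.2) with hDdef
  by_contra hcon
  push_neg at hcon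
  have hbound : ∀ A ∈ sepSet u v, 2 * cut H A ≤ t := by
    intro A hA
    have := hcon A (mem_sepSet_balanced hn hA)
    omega
  have hsum_le : ∑ A ∈ sepSet u v, 2 * cut H A ≤ (sepSet u v).card * t :=
    Finset.sum_le_card_nsmul _ _ _ hbound
  have key : ∀ p ∈ D, C1 + (if p ∈ ({(u,v),(v,u)} : Finset (V × V)) then C1 else 0)
      ≤ Ncnt u v p + Ncnt u v p.swap := by
    intro p hp
    rw [hDdef, mem_filter] at hp
    by_cases hmem : p ∈ ({(u,v),(v,u)} : Finset (V × V))
    · rw [if_pos hmem]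
      simp only [mem_insert, mem_singleton] at hmem
      rcases hmem with rfl | rfl
      · rw [NN_uv2 hn huv]; omega
      · rw [NN_vu2 hn huv]; omega
    · rw [if_neg hmem, add_zero]
      exact NN_ge hn huv H p hp.2
  have hpair_sub : ({(u,v),(v,u)} : Finset (V × V)) ⊆ D := by
    intro p hp
    simp only [mem_insert, mem_singleton] at hp
    rw [hDdef, mem_filter]
    rcases hp with rfl | rfl
    · exact ⟨mem_univ _, hadj⟩
    · exact ⟨mem_univ _, hadj.symm⟩
  have hpaircard : ({(u,v),(v,u)} : Finset (V × V)).card = 2 := by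
    rw [card_insert_of_notMem (by simp [Prod.ext_iff, huv]), card_singleton]
  have hlhs : ∑ p ∈ D, (C1 + (if p ∈ ({(u,v),(v,u)} : Finset (V × V)) then C1 else 0))
      = D.card * C1 + 2 * C1 := by
    rw [Finset.sum_add_distrib, Finset.sum_const, smul_eq_mul]
    congr 1
    rw [Finset.sum_ite_mem, Finset.inter_eq_right.mpr hpair_sub, Finset.sum_const,
      hpaircard, smul_eq_mul]
  have hDcard : D.card = 2 * t := by
    rw [htdef, SimpleGraph.two_mul_card_edgeFinset]
  have hsum2 : ∑ p ∈ D, (Ncnt u v p + Ncnt u v p.swap) = 2 * ∑ A ∈ sepSet u v, cut H A := by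
    rw [Finset.sum_add_distrib, sum_swap_core, sum_cut_core]
    ring
  have hchain : D.card * C1 + 2 * C1 ≤ 2 * ∑ A ∈ sepSet u v, cut H A := by
    rw [← hlhs, ← hsum2]
    exact Finset.sum_le_sum key
  have hC1pos : 0 < C1 := chooseMiddlePos (Fintype.card V) (by omega)
  have hA2 : (sepSet u v).card = 2 * C1 := card_sepSet hn huv
  have h2sum : ∑ A ∈ sepSet u v, 2 * cut H A = 2 * ∑ A ∈ sepSet u v, cut H A :=
    (Finset.mul_sum _ _ _).symm
  rw [h2sum, hA2] at hsum_le
  rw [hDcard] at hchain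
  nlinarith

include hn in
lemma lemmaB (H : SimpleGraph V) [DecidableRel H.Adj] {u v w x : V} (hadj : H.Adj u v)
    (hadj2 : H.Adj w x) (hwu : w ≠ u) (hwv : w ≠ v) (hxu : x ≠ u) (hxv : x ≠ v) :
    ∃ A : Finset V, Balanced A ∧ H.edgeFinset.card + 2 ≤ 2 * cut H A := by
  classical
  have huv : u ≠ v := hadj.ne
  have hwx : w ≠ x := hadj2.ne
  set C1 := (Fintype.card V - 2).choose ((Fintype.card V + 1) / 2 - 1) with hC1def
  set t := H.edgeFinset.card with htdef
  set D := ((univ : Finset (V × V)).filter fun p => H.Adj p.1 p.2) with hDdef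
  by_contra hcon
  push_neg at hcon
  have hbound : ∀ A ∈ sepSet u v, 2 * cut H A ≤ t + 1 := by
    intro A hA
    have := hcon A (mem_sepSet_balanced hn hA)
    omega
  have hsum_le : ∑ A ∈ sepSet u v, 2 * cut H A ≤ (sepSet u v).card * (t + 1) :=
    Finset.sum_le_card_nsmul _ _ _ hbound
  have key : ∀ p ∈ D, C1 + ((if p ∈ ({(u,v),(v,u)} : Finset (V × V)) then C1 else 0)
        + (if p ∈ ({(w,x),(x,w)} : Finset (V × V)) then 1 else 0))
      ≤ Ncnt u v p + Ncnt u v p.swap := by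
    intro p hp
    rw [hDdef, mem_filter] at hp
    by_cases hmem : p ∈ ({(u,v),(v,u)} : Finset (V × V))
    · rw [if_pos hmem]
      have hnot : p ∉ ({(w,x),(x,w)} : Finset (V × V)) := by
        simp only [mem_insert, mem_singleton] at hmem ⊢
        rcases hmem with rfl | rfl <;> simp [Prod.ext_iff, hwu.symm, hwv.symm, hxu.symm, hxv.symm]
      rw [if_neg hnot, add_zero]
      simp only [mem_insert, mem_singleton] at hmem
      rcases hmem with rfl | rfl
      · rw [NN_uv2 hn huv]; omega
      · rw [NN_vu2 hn huv]; omega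
    · rw [if_neg hmem, zero_add]
      by_cases hmem2 : p ∈ ({(w,x),(x,w)} : Finset (V × V))
      · rw [if_pos hmem2]
        simp only [mem_insert, mem_singleton] at hmem2
        rcases hmem2 with rfl | rfl
        · exact NN_wx2 hn huv w x hwx hwu hwv hxu hxv
        · exact NN_wx2 hn huv x w hwx.symm hxu hxv hwu hwv
      · rw [if_neg hmem2, add_zero]
        exact NN_ge hn huv H p hp.2
  have hpair_sub : ({(u,v),(v,u)} : Finset (V × V)) ⊆ D := by
    intro p hp
    simp only [mem_insert, mem_singleton] at hp
    rw [hDdef, mem_filter]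
    rcases hp with rfl | rfl
    · exact ⟨mem_univ _, hadj⟩
    · exact ⟨mem_univ _, hadj.symm⟩
  have hpair_sub2 : ({(w,x),(x,w)} : Finset (V × V)) ⊆ D := by
    intro p hp
    simp only [mem_insert, mem_singleton] at hp
    rw [hDdef, mem_filter]
    rcases hp with rfl | rfl
    · exact ⟨mem_univ _, hadj2⟩
    · exact ⟨mem_univ _, hadj2.symm⟩
  have hpaircard : ({(u,v),(v,u)} : Finset (V × V)).card = 2 := by
    rw [card_insert_of_notMem (by simp [Prod.ext_iff, huv]), card_singleton]
  have hpaircard2 : ({(w,x),(x,w)} : Finset (V × V)).card = 2 := by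
    rw [card_insert_of_notMem (by simp [Prod.ext_iff, hwx]), card_singleton]
  have hlhs : ∑ p ∈ D, (C1 + ((if p ∈ ({(u,v),(v,u)} : Finset (V × V)) then C1 else 0)
        + (if p ∈ ({(w,x),(x,w)} : Finset (V × V)) then 1 else 0)))
      = D.card * C1 + (2 * C1 + 2) := by
    rw [Finset.sum_add_distrib, Finset.sum_const, smul_eq_mul]
    congr 1
    rw [Finset.sum_add_distrib]
    congr 1
    · rw [Finset.sum_ite_mem, Finset.inter_eq_right.mpr hpair_sub, Finset.sum_const,
        hpaircard, smul_eq_mul]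
    · rw [Finset.sum_ite_mem, Finset.inter_eq_right.mpr hpair_sub2, Finset.sum_const,
        hpaircard2, smul_eq_mul, mul_one]
  have hDcard : D.card = 2 * t := by
    rw [htdef, SimpleGraph.two_mul_card_edgeFinset]
  have hsum2 : ∑ p ∈ D, (Ncnt u v p + Ncnt u v p.swap) = 2 * ∑ A ∈ sepSet u v, cut H A := by
    rw [Finset.sum_add_distrib, sum_swap_core, sum_cut_core]
    ring
  have hchain : D.card * C1 + (2 * C1 + 2) ≤ 2 * ∑ A ∈ sepSet u v, cut H A := by
    rw [← hlhs, ← hsum2]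
    exact Finset.sum_le_sum key
  have hC1pos : 0 < C1 := chooseMiddlePos (Fintype.card V) (by omega)
  have hA2 : (sepSet u v).card = 2 * C1 := card_sepSet hn huv
  have h2sum : ∑ A ∈ sepSet u v, 2 * cut H A = 2 * ∑ A ∈ sepSet u v, cut H A :=
    (Finset.mul_sum _ _ _).symm
  rw [h2sum, hA2] at hsum_le
  rw [hDcard] at hchain
  nlinarith

end main

end CountLemmas

set_option maxHeartbeats 1000000 in
lemma classify (H : SimpleGraph V)
    (hnd : ∀ a b x y : V, H.Adj a b → H.Adj x y → a = x ∨ a = y ∨ b = x ∨ b = y)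
    (hne : ∃ a b : V, H.Adj a b)
    (hnstar : ¬ ∃ c : V, ∀ x y : V, H.Adj x y → x = c ∨ y = c) :
    ∃ a b c : V, a ≠ b ∧ a ≠ c ∧ b ≠ c ∧
      (∀ x y : V, H.Adj x y ↔ (pairEq x y a b ∨ pairEq x y a c ∨ pairEq x y b c)) := by
  push_neg at hnstar
  obtain ⟨a, b, hab⟩ := hne
  obtain ⟨x, y, hxy, hxa, hya⟩ := hnstar a
  -- the edge xy misses a, but meets ab, so it contains b
  have hb : b = x ∨ b = y := by
    rcases hnd a b x y hab hxy with h | h | h | h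
    · exact absurd h.symm hxa
    · exact absurd h.symm hya
    · exact Or.inl h
    · exact Or.inr h
  -- get c with H.Adj b c, c ≠ a, c ≠ b
  obtain ⟨c, hbc, hca, hcb⟩ : ∃ c : V, H.Adj b c ∧ c ≠ a ∧ c ≠ b := by
    rcases hb with rfl | rfl
    · exact ⟨y, hxy, hya, hxy.ne'⟩
    · exact ⟨x, hxy.symm, hxa, hxy.ne⟩
  -- now get the edge ac
  obtain ⟨p, q, hpq, hpb, hqb⟩ := hnstar b
  have hpa : p = a ∨ q = a := by
    rcases hnd p q a b hpq hab with h | h | h | h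
    · exact Or.inl h
    · exact absurd h hpb
    · exact Or.inr h
    · exact absurd h hqb
  have hpc : p = c ∨ q = c := by
    rcases hnd p q b c hpq hbc with h | h | h | h
    · exact absurd h hpb
    · exact Or.inl h
    · exact absurd h hqb
    · exact Or.inr h
  have hac : H.Adj a c := by
    rcases hpa with rfl | rfl
    · rcases hpc with rfl | rfl
      · exact absurd rfl hca
      · exact hpq
    · rcases hpc with rfl | rfl
      · exact hpq.symm
      · exact absurd rfl hca
  refine ⟨a, b, c, hab.ne, (Ne.symm hca), (Ne.symm hcb), ?_⟩
  intro s t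
  constructor
  · intro hst
    have h1 := hnd s t a b hst hab
    have h2 := hnd s t b c hst hbc
    have h3 := hnd s t a c hst hac
    have hstne : s ≠ t := hst.ne
    have hab' : a ≠ b := hab.ne
    have hac' : a ≠ c := Ne.symm hca
    have hbc' : b ≠ c := Ne.symm hcb
    unfold pairEq
    rcases h1 with h|h|h|h <;> rcases h2 with g|g|g|g <;> rcases h3 with f|f|f|f <;>
      subst_vars <;> simp_all
  · intro h
    unfold pairEq at h
    rcases h with (⟨rfl, rfl⟩ | ⟨rfl, rfl⟩) | (⟨rfl, rfl⟩ | ⟨rfl, rfl⟩) | (⟨rfl, rfl⟩ | ⟨rfl, rfl⟩)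
    · exact hab
    · exact hab.symm
    · exact hac
    · exact hac.symm
    · exact hbc
    · exact hbc.symm

section MoreLemmas
variable [Fintype V] [DecidableEq V]
lemma star_case (hn : 4 ≤ Fintype.card V) (H : SimpleGraph V) [DecidableRel H.Adj] (c : V)
    (hstar : ∀ x y : V, H.Adj x y → x = c ∨ y = c)
    (ht3 : 3 ≤ H.edgeFinset.card) (htodd : H.edgeFinset.card % 2 = 1)
    (z : V) (hzc : z ≠ c) (hznadj : ¬ H.Adj c z) :
    ∃ A : Finset V, Balanced A ∧ H.edgeFinset.card + 3 ≤ 2 * cut H A := by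
  set n := Fintype.card V with hndef
  set t := H.edgeFinset.card with htdef
  set L := H.neighborFinset c with hLdef
  have hcL : c ∉ L := by simp [hLdef]
  have htL : t = L.card := by
    have hEq : H.edgeFinset = H.incidenceFinset c := by
      ext e
      induction e using Sym2.ind with
      | _ x y =>
        rw [SimpleGraph.mem_incidenceFinset]
        simp only [SimpleGraph.mem_edgeFinset, SimpleGraph.incidenceSet, Set.mem_setOf_eq,
          SimpleGraph.mem_edgeSet]
        constructor
        · intro h
          refine ⟨h, ?_⟩
          rcases hstar x y h with rfl | rfl
          · exact Sym2.mem_mk_left _ _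
          · exact Sym2.mem_mk_right _ _
        · exact fun h => h.1
    rw [htdef, hEq, SimpleGraph.card_incidenceFinset_eq_degree]
    rfl
  -- sizes
  have hLcard : L.card = t := htL.symm
  have htn : t ≤ n - 2 := by
    rw [← hLcard]
    calc L.card ≤ ((univ : Finset V) \ {c, z}).card := by
          apply Finset.card_le_card
          intro l hl
          simp only [mem_sdiff, mem_univ, true_and, mem_insert, mem_singleton]
          rintro (rfl | rfl)
          · exact hcL hl
          · exact hznadj ((SimpleGraph.mem_neighborFinset _ _ _).mp hl)
      _ = n - 2 := by
          rw [card_sdiff_of_subset (subset_univ _), card_univ,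
            card_insert_of_notMem (by simp [hzc.symm]), card_singleton]
  have hRcard : ((univ : Finset V) \ insert c L).card = n - 1 - t := by
    rw [card_sdiff_of_subset (subset_univ _), card_insert_of_notMem hcL, card_univ, hLcard]
    omega
  set m1 := min (n / 2 - 1) (n - 1 - t) with hm1def
  obtain ⟨S1, hS1sub, hS1card⟩ := Finset.exists_subset_card_eq (s := (univ : Finset V) \ insert c L) (n := m1)
    (by rw [hRcard]; omega)
  set r := (n / 2 - 1) - m1 with hrdef
  obtain ⟨S2, hS2sub, hS2card⟩ := Finset.exists_subset_card_eq (s := L) (n := r) (by omega)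
  set A := insert c (S1 ∪ S2) with hAdef
  have hcS1 : c ∉ S1 := fun h => by
    have := hS1sub h; simp at this
  have hcS2 : c ∉ S2 := fun h => hcL (hS2sub h)
  have hS12 : Disjoint S1 S2 := by
    refine Finset.disjoint_left.mpr fun x hx1 hx2 => ?_
    have := hS1sub hx1
    simp only [mem_sdiff, mem_insert, mem_univ, true_and] at this
    exact this (Or.inr (hS2sub hx2))
  have hAcard : A.card = n / 2 := by
    rw [hAdef, card_insert_of_notMem (by simp [hcS1, hcS2]),
      card_union_of_disjoint hS12, hS1card, hS2card]
    omega
  refine ⟨A, (balanced_iff A).mpr (Or.inl hAcard), ?_⟩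
  -- cut lower bound
  have hLA : L \ A = L \ S2 := by
    ext x
    simp only [mem_sdiff, hAdef, mem_insert, mem_union]
    constructor
    · intro ⟨h1, h2⟩; exact ⟨h1, fun h => h2 (Or.inr (Or.inr h))⟩
    · intro ⟨h1, h2⟩
      refine ⟨h1, ?_⟩
      rintro (rfl | h | h)
      · exact hcL h1
      · have := hS1sub h
        simp only [mem_sdiff, mem_insert, mem_univ, true_and] at this
        exact this (Or.inr h1)
      · exact h2 h
  have hcut : (L \ A).card ≤ cut H A := by
    unfold cut
    apply Finset.card_le_card_of_injOn (fun l => (c, l))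
    · intro l hl
      simp only [Finset.mem_coe, mem_sdiff] at hl
      simp only [Finset.mem_coe, mem_filter, mem_product, Finset.mem_compl]
      exact ⟨⟨mem_insert_self _ _, hl.2⟩, (SimpleGraph.mem_neighborFinset _ _ _).mp hl.1⟩
    · intro a _ b _ hab
      simpa using congrArg Prod.snd hab
  have hLAcard : (L \ A).card = t - r := by
    rw [hLA, card_sdiff_of_subset hS2sub, hLcard, hS2card]
  omega


lemma adj_compl_iff (G : SimpleGraph V) (a b : V) : G.Adj a b ↔ a ≠ b ∧ ¬ Gᶜ.Adj a b := by
  simp only [SimpleGraph.compl_adj, not_and, not_not]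
  constructor
  · exact fun h => ⟨h.ne, fun _ => h⟩
  · exact fun h => h.2 h.1

lemma pairEq_ne {a b u v : V} (h : pairEq a b u v) (huv : u ≠ v) : a ≠ b := by
  rcases h with ⟨rfl, rfl⟩ | ⟨rfl, rfl⟩
  · exact huv
  · exact huv.symm

lemma cut_le_t (H : SimpleGraph V) [DecidableRel H.Adj] (A : Finset V) :
    cut H A ≤ H.edgeFinset.card := by
  unfold cut
  apply Finset.card_le_card_of_injOn (fun p : V × V => s(p.1, p.2))
  · intro p hp
    simp only [Finset.mem_coe, mem_filter, mem_product] at hp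
    exact SimpleGraph.mem_edgeFinset.mpr ((SimpleGraph.mem_edgeSet H).mpr hp.2)
  · intro p hp q hq hpq
    simp only [Finset.mem_coe, mem_filter, mem_product, Finset.mem_compl] at hp hq
    have := Sym2.eq_iff.mp hpq
    rcases this with ⟨h1, h2⟩ | ⟨h1, h2⟩
    · exact Prod.ext h1 h2
    · exact absurd (h1 ▸ hp.1.1) hq.1.2
  
lemma cut_zero (H : SimpleGraph V) [DecidableRel H.Adj] (h : ∀ a b : V, ¬ H.Adj a b)
    (A : Finset V) : cut H A = 0 := by
  rw [cut, Finset.card_eq_zero, Finset.filter_eq_empty_iff]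
  exact fun p _ => h p.1 p.2

lemma edgeFinset_of_pair (H : SimpleGraph V) [DecidableRel H.Adj] (u v : V) (huv : u ≠ v)
    (hchar : ∀ a b : V, H.Adj a b ↔ pairEq a b u v) :
    H.edgeFinset = {s(u, v)} := by
  ext e
  induction e using Sym2.ind with
  | _ x y =>
    simp only [SimpleGraph.mem_edgeFinset, SimpleGraph.mem_edgeSet, mem_singleton,
      Sym2.eq_iff, hchar, pairEq]

lemma edgeFinset_of_triangle (H : SimpleGraph V) [DecidableRel H.Adj] (u v w : V)
    (h1 : u ≠ v) (h2 : u ≠ w) (h3 : v ≠ w)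
    (hchar : ∀ a b : V, H.Adj a b ↔ (pairEq a b u v ∨ pairEq a b u w ∨ pairEq a b v w)) :
    H.edgeFinset.card = 3 := by
  have he : H.edgeFinset = {s(u, v), s(u, w), s(v, w)} := by
    ext e
    induction e using Sym2.ind with
    | _ x y =>
      simp only [SimpleGraph.mem_edgeFinset, SimpleGraph.mem_edgeSet, mem_insert, mem_singleton,
        Sym2.eq_iff, hchar, pairEq]
  rw [he, card_insert_of_notMem (by simp [Sym2.eq_iff, h1, h2, h3, h1.symm, h2.symm, h3.symm]),
    card_insert_of_notMem (by simp [Sym2.eq_iff, h1, h2, h3, h1.symm, h2.symm, h3.symm]),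
    card_singleton]

lemma cut_triangle_le_two (H : SimpleGraph V) [DecidableRel H.Adj] (u v w : V)
    (hchar : ∀ a b : V, H.Adj a b ↔ (pairEq a b u v ∨ pairEq a b u w ∨ pairEq a b v w))
    (A : Finset V) : cut H A ≤ 2 := by
  have main : ∀ S : Finset (V × V), S.card ≤ 2 →
      (∀ x y : V, H.Adj x y → x ∈ A → y ∉ A → (x, y) ∈ S) → cut H A ≤ 2 := by
    intro S hS h
    refine le_trans (Finset.card_le_card ?_) hS
    intro p hp
    simp only [mem_filter, mem_product, Finset.mem_compl] at hp
    have := h p.1 p.2 hp.2 hp.1.1 hp.1.2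
    simpa using this
  have two : ∀ p q : V × V, ({p, q} : Finset (V × V)).card ≤ 2 :=
    fun p q => le_trans (Finset.card_insert_le _ _) (by simp)
  by_cases hu : u ∈ A <;> by_cases hv : v ∈ A <;> by_cases hw : w ∈ A
  · refine main ∅ (by simp) fun x y hadj hx hy => ?_
    rw [hchar] at hadj
    clear hchar main two
    rcases hadj with (⟨rfl, rfl⟩ | ⟨rfl, rfl⟩) | (⟨rfl, rfl⟩ | ⟨rfl, rfl⟩) | (⟨rfl, rfl⟩ | ⟨rfl, rfl⟩) <;>
      simp only [mem_insert, mem_singleton, Prod.mk.injEq, Finset.notMem_empty] <;> tauto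
  · refine main {(u, w), (v, w)} (two _ _) fun x y hadj hx hy => ?_
    rw [hchar] at hadj
    clear hchar main two
    rcases hadj with (⟨rfl, rfl⟩ | ⟨rfl, rfl⟩) | (⟨rfl, rfl⟩ | ⟨rfl, rfl⟩) | (⟨rfl, rfl⟩ | ⟨rfl, rfl⟩) <;>
      simp only [mem_insert, mem_singleton, Prod.mk.injEq, Finset.notMem_empty] <;> tauto
  · refine main {(u, v), (w, v)} (two _ _) fun x y hadj hx hy => ?_
    rw [hchar] at hadj
    clear hchar main two
    rcases hadj with (⟨rfl, rfl⟩ | ⟨rfl, rfl⟩) | (⟨rfl, rfl⟩ | ⟨rfl, rfl⟩) | (⟨rfl, rfl⟩ | ⟨rfl, rfl⟩) <;>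
      simp only [mem_insert, mem_singleton, Prod.mk.injEq, Finset.notMem_empty] <;> tauto
  · refine main {(u, v), (u, w)} (two _ _) fun x y hadj hx hy => ?_
    rw [hchar] at hadj
    clear hchar main two
    rcases hadj with (⟨rfl, rfl⟩ | ⟨rfl, rfl⟩) | (⟨rfl, rfl⟩ | ⟨rfl, rfl⟩) | (⟨rfl, rfl⟩ | ⟨rfl, rfl⟩) <;>
      simp only [mem_insert, mem_singleton, Prod.mk.injEq, Finset.notMem_empty] <;> tauto
  · refine main {(v, u), (w, u)} (two _ _) fun x y hadj hx hy => ?_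
    rw [hchar] at hadj
    clear hchar main two
    rcases hadj with (⟨rfl, rfl⟩ | ⟨rfl, rfl⟩) | (⟨rfl, rfl⟩ | ⟨rfl, rfl⟩) | (⟨rfl, rfl⟩ | ⟨rfl, rfl⟩) <;>
      simp only [mem_insert, mem_singleton, Prod.mk.injEq, Finset.notMem_empty] <;> tauto
  · refine main {(v, u), (v, w)} (two _ _) fun x y hadj hx hy => ?_
    rw [hchar] at hadj
    clear hchar main two
    rcases hadj with (⟨rfl, rfl⟩ | ⟨rfl, rfl⟩) | (⟨rfl, rfl⟩ | ⟨rfl, rfl⟩) | (⟨rfl, rfl⟩ | ⟨rfl, rfl⟩) <;>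
      simp only [mem_insert, mem_singleton, Prod.mk.injEq, Finset.notMem_empty] <;> tauto
  · refine main {(w, u), (w, v)} (two _ _) fun x y hadj hx hy => ?_
    rw [hchar] at hadj
    clear hchar main two
    rcases hadj with (⟨rfl, rfl⟩ | ⟨rfl, rfl⟩) | (⟨rfl, rfl⟩ | ⟨rfl, rfl⟩) | (⟨rfl, rfl⟩ | ⟨rfl, rfl⟩) <;>
      simp only [mem_insert, mem_singleton, Prod.mk.injEq, Finset.notMem_empty] <;> tauto
  · refine main ∅ (by simp) fun x y hadj hx hy => ?_
    rw [hchar] at hadj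
    clear hchar main two
    rcases hadj with (⟨rfl, rfl⟩ | ⟨rfl, rfl⟩) | (⟨rfl, rfl⟩ | ⟨rfl, rfl⟩) | (⟨rfl, rfl⟩ | ⟨rfl, rfl⟩) <;>
      simp only [mem_insert, mem_singleton, Prod.mk.injEq, Finset.notMem_empty] <;> tauto

lemma card_edge_add_compl (G : SimpleGraph V) [DecidableRel G.Adj] :
    G.edgeFinset.card + Gᶜ.edgeFinset.card = (Fintype.card V).choose 2 := by
  classical
  rw [← SimpleGraph.card_edgeFinset_top_eq_card_choose_two]
  have hdisj : Disjoint G.edgeFinset Gᶜ.edgeFinset := by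
    rw [SimpleGraph.edgeFinset, SimpleGraph.edgeFinset, Set.disjoint_toFinset]
    exact SimpleGraph.disjoint_edgeSet.mpr disjoint_compl_right
  rw [← Finset.card_union_of_disjoint hdisj]
  congr 1
  ext e
  induction e using Sym2.ind with
  | _ x y =>
    simp only [mem_union, SimpleGraph.mem_edgeFinset, SimpleGraph.mem_edgeSet,
      SimpleGraph.compl_adj, SimpleGraph.top_adj]
    constructor
    · rintro (h | h)
      · exact h.ne
      · exact h.1
    · intro hne
      by_cases hadj : G.Adj x y
      · exact Or.inl hadj
      · exact Or.inr ⟨hne, hadj⟩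

lemma not_isolated (G : SimpleGraph V) (hconn : G.Connected) (hn : 2 ≤ Fintype.card V) (c : V) :
    ∃ z : V, z ≠ c ∧ G.Adj c z := by
  have : Nontrivial V := Fintype.one_lt_card_iff_nontrivial.mp (by omega)
  obtain ⟨w, hw⟩ := exists_ne c
  obtain ⟨p⟩ := hconn.preconnected c w
  cases p with
  | nil => exact absurd rfl hw
  | cons h q => exact ⟨_, h.ne', h⟩

lemma eq_top_of_compl_edgeless (G : SimpleGraph V) [DecidableRel G.Adj]
    (hG : Gᶜ.edgeFinset.card = 0) : G = ⊤ := by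
  classical
  have h1 : Gᶜ = ⊥ := by
    rw [← SimpleGraph.edgeSet_eq_empty]
    have := Finset.card_eq_zero.mp hG
    rwa [SimpleGraph.edgeFinset, Set.toFinset_eq_empty] at this
  have := congrArg (·ᶜ) h1
  simpa using this


end MoreLemmas

end Helpers

/-- for `n ≥ 4`, `σ⁻(G) = ⌊m/2 + n/4⌋` iff `G` is `K_n`,
`K_n - e` or `K_n - △`. -/
theorem stmt14 [Fintype V] [DecidableEq V] (G : SimpleGraph V) [DecidableRel G.Adj]
    (hconn : G.Connected) (hn : 4 ≤ Fintype.card V) :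
    rna G = (2 * G.edgeSet.ncard + Fintype.card V) / 4 ↔
      (G = ⊤ ∨ IsCompleteMinusEdge G ∨ IsCompleteMinusTriangle G) := by
  classical
  have hm : G.edgeSet.ncard = G.edgeFinset.card := by
    rw [Set.ncard_eq_toFinset_card']
    congr 1
  rw [hm]
  have hmt : G.edgeFinset.card + Gᶜ.edgeFinset.card = (Fintype.card V).choose 2 :=
    card_edge_add_compl G
  have hTc : Fintype.card V / 2 * ((Fintype.card V + 1) / 2)
      = (2 * G.edgeFinset.card + Fintype.card V) / 4 + (Gᶜ.edgeFinset.card + 1) / 2 :=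
    arith1 _ _ _ hn hmt
  have hsum : ∀ A : Finset V, Balanced A →
      cut G A + cut Gᶜ A = Fintype.card V / 2 * ((Fintype.card V + 1) / 2) := by
    intro A hA
    rw [cut_compl G A]
    have hAc : (Aᶜ : Finset V).card = Fintype.card V - A.card := Finset.card_compl A
    have hle : A.card ≤ Fintype.card V := Finset.card_le_univ A
    rcases (balanced_iff A).mp hA with h | h
    · rw [hAc, h, show Fintype.card V - Fintype.card V / 2 = (Fintype.card V + 1) / 2 by omega]
    · rw [hAc, h, show Fintype.card V - (Fintype.card V + 1) / 2 = Fintype.card V / 2 by omega,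
        mul_comm]
  have hget : ∀ e ∈ Gᶜ.edgeFinset, ∃ u v : V, Gᶜ.Adj u v := by
    intro e he
    induction e using Sym2.ind with
    | _ x y => exact ⟨x, y, (SimpleGraph.mem_edgeSet _).mp (SimpleGraph.mem_edgeFinset.mp he)⟩
  have hub : ∃ A : Finset V, Balanced A ∧
      cut G A ≤ (2 * G.edgeFinset.card + Fintype.card V) / 4 := by
    rcases Nat.eq_zero_or_pos (Gᶜ.edgeFinset.card) with ht0 | htpos
    · obtain ⟨A, -, hA⟩ := Finset.exists_subset_card_eq (s := (univ : Finset V)) (n := Fintype.card V / 2)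
        (by rw [card_univ]; omega)
      have hbal : Balanced A := (balanced_iff A).mpr (Or.inl hA)
      refine ⟨A, hbal, ?_⟩
      have h0 : cut Gᶜ A ≤ Gᶜ.edgeFinset.card := cut_le_t Gᶜ A
      have := hsum A hbal
      omega
    · obtain ⟨e, he⟩ := Finset.card_pos.mp htpos
      obtain ⟨u, v, hadj⟩ := hget e he
      obtain ⟨A, hbal, hcut⟩ := lemmaA hn Gᶜ hadj
      have := hsum A hbal
      exact ⟨A, hbal, by omega⟩
  have hrna_le : rna G ≤ (2 * G.edgeFinset.card + Fintype.card V) / 4 := by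
    obtain ⟨A, hbal, hle⟩ := hub
    exact le_trans (Nat.sInf_le ⟨A, hbal, rfl⟩) hle
  constructor
  · intro hrna
    have hmin : ∀ A : Finset V, Balanced A → cut Gᶜ A ≤ (Gᶜ.edgeFinset.card + 1) / 2 := by
      intro A hA
      have h1 : rna G ≤ cut G A := Nat.sInf_le ⟨A, hA, rfl⟩
      rw [hrna] at h1
      have h2 := hsum A hA
      omega
    by_contra hNot
    push_neg at hNot
    obtain ⟨h1, h2, h3⟩ := hNot
    rcases Nat.eq_zero_or_pos (Gᶜ.edgeFinset.card) with ht0 | htpos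
    · exact h1 (eq_top_of_compl_edgeless G ht0)
    obtain ⟨e, he⟩ := Finset.card_pos.mp htpos
    obtain ⟨u, v, hadj⟩ := hget e he
    rcases Nat.mod_two_eq_zero_or_one (Gᶜ.edgeFinset.card) with heven | hodd
    · obtain ⟨A, hbal, hcut⟩ := lemmaA hn Gᶜ hadj
      have := hmin A hbal
      omega
    · by_cases ht1 : Gᶜ.edgeFinset.card = 1
      · apply h2
        obtain ⟨e', he'⟩ := Finset.card_eq_one.mp ht1
        obtain ⟨x, y, rfl⟩ : ∃ x y : V, e' = s(x, y) := by
          induction e' using Sym2.ind with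
          | _ x y => exact ⟨x, y, rfl⟩
        have hxyadj : Gᶜ.Adj x y := by
          have hm2 : s(x, y) ∈ Gᶜ.edgeFinset := he' ▸ mem_singleton_self _
          exact (SimpleGraph.mem_edgeSet _).mp (SimpleGraph.mem_edgeFinset.mp hm2)
        refine ⟨x, y, hxyadj.ne, fun a b => ?_⟩
        rw [adj_compl_iff G a b]
        have hchar : Gᶜ.Adj a b ↔ pairEq a b x y := by
          rw [show Gᶜ.Adj a b ↔ s(a, b) ∈ Gᶜ.edgeFinset from
            (SimpleGraph.mem_edgeFinset.trans (SimpleGraph.mem_edgeSet _)).symm, he',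
            mem_singleton, Sym2.eq_iff]
          rfl
        rw [hchar]
      · have ht3 : 3 ≤ Gᶜ.edgeFinset.card := by omega
        by_cases hdisj : ∃ a b x y : V,
            Gᶜ.Adj a b ∧ Gᶜ.Adj x y ∧ x ≠ a ∧ x ≠ b ∧ y ≠ a ∧ y ≠ b
        · obtain ⟨a, b, x, y, hab, hxy, hd1, hd2, hd3, hd4⟩ := hdisj
          obtain ⟨A, hbal, hcut⟩ := lemmaB hn Gᶜ hab hxy hd1 hd2 hd3 hd4
          have := hmin A hbal
          omega
        · have hnd : ∀ a b x y : V, Gᶜ.Adj a b → Gᶜ.Adj x y →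
              a = x ∨ a = y ∨ b = x ∨ b = y := by
            intro a b x y hab hxy
            by_contra hc
            push_neg at hc
            exact hdisj ⟨a, b, x, y, hab, hxy, hc.1.symm, hc.2.2.1.symm, hc.2.1.symm,
              hc.2.2.2.symm⟩
          by_cases hstar : ∃ c0 : V, ∀ x y : V, Gᶜ.Adj x y → x = c0 ∨ y = c0
          · obtain ⟨c0, hc0⟩ := hstar
            obtain ⟨z, hz, hGadj⟩ := not_isolated G hconn (by omega) c0
            have hznadj : ¬ Gᶜ.Adj c0 z := fun h => ((G.compl_adj c0 z).mp h).2 hGadj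
            obtain ⟨A, hbal, hcut⟩ := star_case hn Gᶜ c0 hc0 ht3 hodd z hz hznadj
            have := hmin A hbal
            omega
          · obtain ⟨a, b, c, hab', hac', hbc', hchar⟩ := classify Gᶜ hnd ⟨u, v, hadj⟩ hstar
            apply h3
            refine ⟨a, b, c, hab', hac', hbc', fun x y => ?_⟩
            rw [adj_compl_iff G x y, hchar]
  · intro hG
    apply le_antisymm hrna_le
    have hne : (sigmaSet G).Nonempty := by
      obtain ⟨A, hbal, -⟩ := hub
      exact ⟨cut G A, A, hbal, rfl⟩
    apply le_csInf hne
    rintro x ⟨A, hA, rfl⟩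
    have h2 := hsum A hA
    rcases hG with rfl | hG | hG
    · have ht0 : (⊤ : SimpleGraph V)ᶜ.edgeFinset.card = 0 := by
        rw [Finset.card_eq_zero, Finset.eq_empty_iff_forall_notMem]
        intro e he
        induction e using Sym2.ind with
        | _ x y =>
          have hxy : (⊤ : SimpleGraph V)ᶜ.Adj x y :=
            (SimpleGraph.mem_edgeSet _).mp (SimpleGraph.mem_edgeFinset.mp he)
          rw [SimpleGraph.compl_adj, SimpleGraph.top_adj] at hxy
          exact hxy.2 hxy.1
      have h0 : cut (⊤ : SimpleGraph V)ᶜ A ≤ (⊤ : SimpleGraph V)ᶜ.edgeFinset.card :=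
        cut_le_t _ A
      omega
    · obtain ⟨u, v, huv, hchar⟩ := hG
      have hHchar : ∀ a b : V, Gᶜ.Adj a b ↔ pairEq a b u v := by
        intro a b
        have hne' : pairEq a b u v → a ≠ b := fun h => pairEq_ne h huv
        rw [SimpleGraph.compl_adj, hchar a b]
        constructor
        · rintro ⟨hne, hni⟩
          by_contra hp
          exact hni ⟨hne, hp⟩
        · intro hp
          exact ⟨hne' hp, fun hco => hco.2 hp⟩
      have ht1 : Gᶜ.edgeFinset.card = 1 := by
        rw [edgeFinset_of_pair Gᶜ u v huv hHchar, card_singleton]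
      have h0 : cut Gᶜ A ≤ Gᶜ.edgeFinset.card := cut_le_t _ A
      omega
    · obtain ⟨u, v, w, huv, huw, hvw, hchar⟩ := hG
      have hHchar : ∀ a b : V, Gᶜ.Adj a b ↔
          (pairEq a b u v ∨ pairEq a b u w ∨ pairEq a b v w) := by
        intro a b
        have hne1 : pairEq a b u v → a ≠ b := fun h => pairEq_ne h huv
        have hne2 : pairEq a b u w → a ≠ b := fun h => pairEq_ne h huw
        have hne3 : pairEq a b v w → a ≠ b := fun h => pairEq_ne h hvw
        have hne' : (pairEq a b u v ∨ pairEq a b u w ∨ pairEq a b v w) → a ≠ b := by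
          rintro (h | h | h)
          · exact hne1 h
          · exact hne2 h
          · exact hne3 h
        rw [SimpleGraph.compl_adj, hchar a b]
        constructor
        · rintro ⟨hne, hni⟩
          by_contra hp
          exact hni ⟨hne, hp⟩
        · intro hp
          exact ⟨hne' hp, fun hco => hco.2 hp⟩
      have ht3 : Gᶜ.edgeFinset.card = 3 :=
        edgeFinset_of_triangle Gᶜ u v w huv huw hvw hHchar
      have h0 : cut Gᶜ A ≤ 2 := cut_triangle_le_two Gᶜ u v w hHchar A
      omega


end PSG
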